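/- Suppose Δ is an unsatisfiable set of linear clauses such that unit propagation on Δ starting from the empty unit set cannot derive a contradiction. Then every Res(⊕) refutation of Δ, viewed in subspace form as a derivation starting from the linear negations of clauses of Δ and ending with the zero subspace using the addition rule, contains an addition step — deriving span(A, B, f+g+𝟏) from span(A, f) and span(B, g) — such that at least one of the decompositions (A, f) and (B, g) is asserting-like for Δ. -/

import Mathlib

namespace XorSAT

/-- An affine equation over `n` Boolean variables: the coefficients of the `n`
variables together with a right-hand side, i.e. a vector in `F₂^(n+1)`. -/
abbrev Eqn (n : ℕ) : Type := (Fin n → ZMod 2) × ZMod 2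

/-- The equation `𝟏`, i.e. `0 = 1`, satisfied by no assignment. -/
def oneEq (n : ℕ) : Eqn n := (0, 1)

/-- An assignment `x` satisfies the equation `(a, b)` iff `∑ aᵢ xᵢ = b`. -/
def Sats {n : ℕ} (x : Fin n → ZMod 2) (e : Eqn n) : Prop :=
  (∑ i, e.1 i * x i) = e.2

/-- A linear clause: a (finite) disjunction of affine equations. -/
abbrev Clause (n : ℕ) : Type := Finset (Eqn n)

/-- An assignment satisfies a linear clause iff it satisfies some equation in it. -/
def SatsClause {n : ℕ} (x : Fin n → ZMod 2) (C : Clause n) : Prop :=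
  ∃ e ∈ C, Sats x e

/-- A clause is non-tautological if some assignment falsifies every equation of it. -/
def NonTaut {n : ℕ} (C : Clause n) : Prop :=
  ∃ x : Fin n → ZMod 2, ∀ e ∈ C, ¬ Sats x e

/-- The linear negation `⟨C⟩` of a clause `C = f₁ ∨ … ∨ f_m`:
the `F₂`-span of `f₁ + 𝟏, …, f_m + 𝟏`. -/
def linneg {n : ℕ} (C : Clause n) : Submodule (ZMod 2) (Eqn n) :=
  Submodule.span (ZMod 2) ((fun e => e + oneEq n) '' (C : Set (Eqn n)))

/-- A set of equations is consistent if some assignment satisfies all of them. -/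
def Consistent {n : ℕ} (U : Set (Eqn n)) : Prop :=
  ∃ x : Fin n → ZMod 2, ∀ e ∈ U, Sats x e

/-- The `F₂`-linear span of a set of equations, as a submodule. -/
def spn {n : ℕ} (U : Set (Eqn n)) : Submodule (ZMod 2) (Eqn n) :=
  Submodule.span (ZMod 2) U


/-- Unit propagation on clause `C` from units `U` may deduce the equation `f`. -/
def CanDeduce {n : ℕ} (U : Set (Eqn n)) (C : Clause n) (f : Eqn n) : Prop :=
  ¬ linneg C ≤ spn U ∧ linneg C ≤ spn (insert (f + oneEq n) U) ∧
    f ∉ spn U ∧ f + oneEq n ∉ spn U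

/-- One step of unit propagation on the clause set `Δ`: a clause `C ∈ Δ` either
deduces the contradiction `𝟏` (if `⟨C⟩ ⊆ span U`) or deduces some equation `f`. -/
def UPStep {n : ℕ} (Δ : Set (Clause n)) (U U' : Set (Eqn n)) : Prop :=
  Consistent U ∧ ∃ C ∈ Δ,
    (linneg C ≤ spn U ∧ U' = insert (oneEq n) U) ∨
    (∃ f, CanDeduce U C f ∧ U' = insert f U)

/-- A (finite) run of unit propagation on the clause set `Δ`. -/
def UPRun {n : ℕ} (Δ : Set (Clause n)) : Set (Eqn n) → Set (Eqn n) → Prop :=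
  Relation.ReflTransGen (UPStep Δ)

/-- The units `V` are conflict-like w.r.t. `Δ`: some run of unit propagation
starting from `V` and using clauses of `Δ` deduces `𝟏`. -/
def ConflictLike {n : ℕ} (Δ : Set (Clause n)) (V : Set (Eqn n)) : Prop :=
  ∃ W, UPRun Δ V W ∧ oneEq n ∈ W

/-- The decomposition `(V', f)` is absorbed by `Δ`: unit propagation from units `V'`
with clauses `Δ` either derives `𝟏` or derives a unit set whose span contains `f + 𝟏`. -/
def Absorbed {n : ℕ} (Δ : Set (Clause n)) (V' : Set (Eqn n)) (f : Eqn n) : Prop :=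
  ∃ W, UPRun Δ V' W ∧ (oneEq n ∈ W ∨ f + oneEq n ∈ spn W)

/-- Unit propagation on the clause `C` from units `U` results in some
propagation (deducing `𝟏` or deducing some equation). -/
def CanPropagate {n : ℕ} (U : Set (Eqn n)) (C : Clause n) : Prop :=
  linneg C ≤ spn U ∨ ∃ f, CanDeduce U C f

/-- A decomposition `(V', f)` of a conflict-like subspace is asserting-like for `Δ`
if `span(V' ∪ {f})` is conflict-like w.r.t. `Δ` and `(V', f)` is not absorbed by `Δ`. -/
def AssertingLike {n : ℕ} (Δ : Set (Clause n)) (V' : Set (Eqn n)) (f : Eqn n) : Prop :=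
  ConflictLike Δ ((spn (insert f V') : Submodule (ZMod 2) (Eqn n)) : Set (Eqn n)) ∧
  ¬ Absorbed Δ V' f

/-- The data of one addition step in a subspace-form `Res(⊕)` proof: premiss
indices `i, j` and the decompositions `(A, f)` and `(B, g)` being used. -/
structure AddData (n : ℕ) where
  i : ℕ
  j : ℕ
  A : Set (Eqn n)
  f : Eqn n
  B : Set (Eqn n)
  g : Eqn n

/-- Validity of line `k` of a subspace-form `Res(⊕)` proof from `Δ`: an axiom line
is the linear negation of a clause of `Δ`; an addition line is derived from the
decompositions `L i = span(A, f)` and `L j = span(B, g)` as `span(A, B, f+g+𝟏)`. -/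
def SubStepOK {n : ℕ} (Δ : Set (Clause n)) (L : ℕ → Submodule (ZMod 2) (Eqn n))
    (k : ℕ) : Option (AddData n) → Prop
  | none => ∃ C ∈ Δ, L k = linneg C
  | some d => d.i < k ∧ d.j < k ∧
      L d.i = Submodule.span (ZMod 2) (insert d.f d.A) ∧
      L d.j = Submodule.span (ZMod 2) (insert d.g d.B) ∧
      L k = Submodule.span (ZMod 2) (d.A ∪ d.B ∪ {d.f + d.g + oneEq n})


lemma zmod2_add_eq_zero_iff (a b : ZMod 2) : a + b = 0 ↔ a = b := by revert a b; decide

lemma not_sats_oneEq {n : ℕ} (x : Fin n → ZMod 2) : ¬ Sats x (oneEq n) := by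
  simp [Sats, oneEq]

/-- Evaluation of an equation under an assignment, as a linear map. -/
def evalMap {n : ℕ} (x : Fin n → ZMod 2) : Eqn n →ₗ[ZMod 2] ZMod 2 where
  toFun e := (∑ i, e.1 i * x i) + e.2
  map_add' e e' := by
    simp [add_mul, Finset.sum_add_distrib]
    ring
  map_smul' c e := by
    simp [Finset.mul_sum, mul_assoc, mul_add]

lemma sats_iff_evalMap {n : ℕ} (x : Fin n → ZMod 2) (e : Eqn n) :
    Sats x e ↔ evalMap x e = 0 := by
  simp only [Sats, evalMap, LinearMap.coe_mk, AddHom.coe_mk]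
  exact (zmod2_add_eq_zero_iff _ _).symm

lemma sats_of_mem_spn {n : ℕ} {x : Fin n → ZMod 2} {U : Set (Eqn n)}
    (hx : ∀ e ∈ U, Sats x e) {e : Eqn n} (he : e ∈ spn U) : Sats x e := by
  rw [sats_iff_evalMap]
  have hle : spn U ≤ LinearMap.ker (evalMap x) := by
    rw [spn, Submodule.span_le]
    intro u hu
    simpa [LinearMap.mem_ker, ← sats_iff_evalMap] using hx u hu
  exact hle he

lemma oneEq_not_mem_spn_of_consistent {n : ℕ} {U : Set (Eqn n)}
    (h : Consistent U) : oneEq n ∉ spn U := by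
  obtain ⟨x, hx⟩ := h
  intro hmem
  exact not_sats_oneEq x (sats_of_mem_spn hx hmem)

lemma consistent_of_oneEq_not_mem {n : ℕ} {U : Set (Eqn n)}
    (h : oneEq n ∉ spn U) : Consistent U := by
  obtain ⟨φ, hφne, hφbot⟩ :=
    (spn U).exists_dual_map_eq_bot_of_notMem h inferInstance
  have hφzero : ∀ v ∈ spn U, φ v = 0 := by
    intro v hv
    have : φ v ∈ Submodule.map φ (spn U) := ⟨v, hv, rfl⟩
    rw [hφbot] at this
    simpa using this
  have hφone : φ (oneEq n) = 1 := by
    have : ∀ a : ZMod 2, a ≠ 0 → a = 1 := by decide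
    exact this _ hφne
  refine ⟨fun i => φ (Pi.single i 1, 0), fun e he => ?_⟩
  have key : ∀ v : Eqn n, φ v = (∑ i, v.1 i * φ (Pi.single i 1, 0)) + v.2 := by
    intro v
    have hdecomp : v = (∑ i, v.1 i • ((Pi.single i 1 : Fin n → ZMod 2), (0:ZMod 2)))
        + v.2 • oneEq n := by
      have h1 : (∑ i, v.1 i • ((Pi.single i 1 : Fin n → ZMod 2), (0:ZMod 2)))
          = ((v.1 : Fin n → ZMod 2), (0 : ZMod 2)) := by
        rw [Prod.ext_iff]
        constructor
        · simp only [Prod.fst_sum, Prod.smul_mk]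
          rw [← Finset.univ_sum_single v.1]
          congr 1
          funext i
          rw [← Pi.single_smul]
          simp
        · simp [Prod.snd_sum]
      rw [h1]
      simp [oneEq, Prod.ext_iff, Prod.smul_mk]
    calc φ v = φ ((∑ i, v.1 i • ((Pi.single i 1 : Fin n → ZMod 2), (0:ZMod 2)))
        + v.2 • oneEq n) := by rw [← hdecomp]
      _ = (∑ i, v.1 i * φ (Pi.single i 1, 0)) + v.2 * φ (oneEq n) := by
          rw [map_add, map_sum, map_smul, smul_eq_mul]
          congr 1
          apply Finset.sum_congr rfl
          intro i _
          rw [map_smul, smul_eq_mul]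
      _ = (∑ i, v.1 i * φ (Pi.single i 1, 0)) + v.2 := by rw [hφone, mul_one]
  have he0 : φ e = 0 := hφzero e (Submodule.subset_span he)
  rw [key e] at he0
  exact (zmod2_add_eq_zero_iff _ _).mp he0

lemma consistent_iff {n : ℕ} (U : Set (Eqn n)) :
    Consistent U ↔ oneEq n ∉ spn U :=
  ⟨oneEq_not_mem_spn_of_consistent, consistent_of_oneEq_not_mem⟩


lemma spn_mono {n : ℕ} {U V : Set (Eqn n)} (h : U ⊆ V) : spn U ≤ spn V :=
  Submodule.span_mono h

lemma subset_spn {n : ℕ} (U : Set (Eqn n)) : U ⊆ (spn U : Set (Eqn n)) :=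
  Submodule.subset_span

lemma spn_insert_le {n : ℕ} {h : Eqn n} {U : Set (Eqn n)} {Z : Submodule (ZMod 2) (Eqn n)}
    (hh : h ∈ Z) (hU : spn U ≤ Z) : spn (insert h U) ≤ Z := by
  rw [spn, Submodule.span_le]
  intro u hu
  rcases hu with rfl | hu
  · exact hh
  · exact hU (subset_spn U hu)

lemma upstep_subset {n : ℕ} {Δ : Set (Clause n)} {U U' : Set (Eqn n)}
    (h : UPStep Δ U U') : U ⊆ U' := by
  obtain ⟨-, C, -, ⟨-, h⟩ | ⟨f, -, h⟩⟩ := h <;> rw [h] <;> exact Set.subset_insert _ _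

lemma uprun_subset {n : ℕ} {Δ : Set (Clause n)} {U W : Set (Eqn n)}
    (h : UPRun Δ U W) : U ⊆ W := by
  induction h with
  | refl => exact subset_rfl
  | tail _ hstep ih => exact ih.trans (upstep_subset hstep)

lemma eqn_add_self {n : ℕ} (v : Eqn n) : v + v = 0 := by
  have h2 : (2 : ZMod 2) = 0 := by decide
  rw [← two_smul (ZMod 2) v, h2, zero_smul]

lemma mem_spn_insert {n : ℕ} {h x : Eqn n} {Z : Set (Eqn n)}
    (hx : x ∈ spn (insert h Z)) : x ∈ spn Z ∨ x + h ∈ spn Z := by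
  rw [spn, Submodule.span_insert, Submodule.mem_sup] at hx
  obtain ⟨y, hy, z, hz, rfl⟩ := hx
  rw [Submodule.mem_span_singleton] at hy
  obtain ⟨a, rfl⟩ := hy
  have ha : a = 0 ∨ a = 1 := by revert a; decide
  rcases ha with rfl | rfl
  · left; simpa [spn] using hz
  · right
    have heq : (1 : ZMod 2) • h + z + h = z := by
      rw [one_smul]
      have : h + z + h = z + (h + h) := by abel
      rw [this, eqn_add_self, add_zero]
    rw [heq]; exact hz

lemma step_sim {n : ℕ} {Δ : Set (Clause n)} {U U' Z : Set (Eqn n)}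
    (h : UPStep Δ U U') (hle : spn U ≤ spn Z) (hZ : Consistent Z) :
    ∃ Z', UPRun Δ Z Z' ∧
      (oneEq n ∈ Z' ∨ (spn U' ≤ spn Z' ∧ Consistent Z')) := by
  obtain ⟨hU, C, hC, hcase⟩ := h
  rcases hcase with ⟨hlin, rfl⟩ | ⟨f, ⟨hnlin, hlin, hf, hf1⟩, rfl⟩
  · -- conflict step on the small side: conflict on big side too
    refine ⟨insert (oneEq n) Z, Relation.ReflTransGen.single ?_, Or.inl (Set.mem_insert _ _)⟩
    exact ⟨hZ, C, hC, Or.inl ⟨hlin.trans hle, rfl⟩⟩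
  · by_cases hfZ : f ∈ spn Z
    · exact ⟨Z, Relation.ReflTransGen.refl,
        Or.inr ⟨spn_insert_le hfZ hle, hZ⟩⟩
    by_cases hf1Z : f + oneEq n ∈ spn Z
    · -- linneg C ≤ spn Z, conflict
      have hlinZ : linneg C ≤ spn Z :=
        hlin.trans (spn_insert_le hf1Z hle)
      refine ⟨insert (oneEq n) Z, Relation.ReflTransGen.single ?_, Or.inl (Set.mem_insert _ _)⟩
      exact ⟨hZ, C, hC, Or.inl ⟨hlinZ, rfl⟩⟩
    by_cases hlinZ : linneg C ≤ spn Z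
    · refine ⟨insert (oneEq n) Z, Relation.ReflTransGen.single ?_, Or.inl (Set.mem_insert _ _)⟩
      exact ⟨hZ, C, hC, Or.inl ⟨hlinZ, rfl⟩⟩
    · -- deduce f on the big side
      have hded : CanDeduce Z C f := by
        refine ⟨hlinZ, hlin.trans ?_, hfZ, hf1Z⟩
        apply spn_insert_le (subset_spn _ (Set.mem_insert _ _))
        exact hle.trans (spn_mono (Set.subset_insert _ _))
      refine ⟨insert f Z, Relation.ReflTransGen.single ⟨hZ, C, hC, Or.inr ⟨f, hded, rfl⟩⟩, Or.inr ⟨?_, ?_⟩⟩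
      · rw [spn, spn, Submodule.span_insert, Submodule.span_insert]
        exact sup_le_sup le_rfl hle
      · rw [consistent_iff] at hZ ⊢
        intro hone
        rcases mem_spn_insert hone with h0 | h0
        · exact hZ h0
        · exact hf1Z (by rwa [add_comm] at h0)

lemma run_sim {n : ℕ} {Δ : Set (Clause n)} {U W : Set (Eqn n)}
    (h : UPRun Δ U W) :
    ∀ Z : Set (Eqn n), spn U ≤ spn Z → Consistent Z →
    ∃ Z', UPRun Δ Z Z' ∧
      (oneEq n ∈ Z' ∨ (spn W ≤ spn Z' ∧ Consistent Z')) := by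
  induction h with
  | refl => exact fun Z hle hZ => ⟨Z, Relation.ReflTransGen.refl, Or.inr ⟨hle, hZ⟩⟩
  | tail hrun hstep ih =>
    intro Z hle hZ
    obtain ⟨Z1, hrun1, hcase⟩ := ih Z hle hZ
    rcases hcase with hone | ⟨hle1, hZ1⟩
    · exact ⟨Z1, hrun1, Or.inl hone⟩
    · obtain ⟨Z2, hrun2, hcase2⟩ := step_sim hstep hle1 hZ1
      exact ⟨Z2, hrun1.trans hrun2, hcase2⟩


lemma spn_coe {n : ℕ} (V : Submodule (ZMod 2) (Eqn n)) :
    spn (V : Set (Eqn n)) = V := Submodule.span_eq V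

lemma conflictLike_of_absorbed {n : ℕ} {Δ : Set (Clause n)} {A B : Set (Eqn n)}
    {f g : Eqn n} (hA : Absorbed Δ A f) (hB : Absorbed Δ B g) :
    ConflictLike Δ
      ((Submodule.span (ZMod 2) (A ∪ B ∪ {f + g + oneEq n}) :
        Submodule (ZMod 2) (Eqn n)) : Set (Eqn n)) := by
  set V : Submodule (ZMod 2) (Eqn n) :=
    Submodule.span (ZMod 2) (A ∪ B ∪ {f + g + oneEq n}) with hV
  by_cases hone : oneEq n ∈ V
  · exact ⟨V, Relation.ReflTransGen.refl, hone⟩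
  have hcons : Consistent (V : Set (Eqn n)) := by
    rw [consistent_iff, spn_coe]; exact hone
  obtain ⟨WA, hrunA, hWA⟩ := hA
  have hAle : spn A ≤ spn (V : Set (Eqn n)) := by
    rw [spn_coe]
    exact Submodule.span_mono (by intro a ha; exact Or.inl (Or.inl ha))
  obtain ⟨Z1, hrun1, hcase1⟩ := run_sim hrunA (V : Set (Eqn n)) hAle hcons
  rcases hcase1 with h1 | ⟨hWAle, hZ1⟩
  · exact ⟨Z1, hrun1, h1⟩
  have hVZ1 : (V : Set (Eqn n)) ⊆ Z1 := uprun_subset hrun1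
  have hf1 : f + oneEq n ∈ spn Z1 := by
    rcases hWA with h | h
    · exact absurd (hWAle (subset_spn _ h)) ((consistent_iff Z1).mp hZ1)
    · exact hWAle h
  have hBle : spn B ≤ spn Z1 :=
    spn_mono (fun b hb => hVZ1 (Submodule.subset_span (Or.inl (Or.inr hb))))
  obtain ⟨WB, hrunB, hWB⟩ := hB
  obtain ⟨Z2, hrun2, hcase2⟩ := run_sim hrunB Z1 hBle hZ1
  rcases hcase2 with h2 | ⟨hWBle, hZ2⟩
  · exact ⟨Z2, hrun1.trans hrun2, h2⟩
  exfalso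
  have hZ1Z2 : spn Z1 ≤ spn Z2 := spn_mono (uprun_subset hrun2)
  have hg1 : g + oneEq n ∈ spn Z2 := by
    rcases hWB with h | h
    · exact absurd (hWBle (subset_spn _ h)) ((consistent_iff Z2).mp hZ2)
    · exact hWBle h
  have hfg : f + g + oneEq n ∈ spn Z2 := by
    apply subset_spn
    apply (uprun_subset hrun2)
    apply hVZ1
    exact Submodule.subset_span (Or.inr rfl)
  have hsum : (f + oneEq n) + (g + oneEq n) + (f + g + oneEq n) = oneEq n := by
    have h1 : (f + oneEq n) + (g + oneEq n) = f + g := by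
      have : (f + oneEq n) + (g + oneEq n) = (f + g) + (oneEq n + oneEq n) := by abel
      rw [this, eqn_add_self, add_zero]
    rw [h1]
    have : (f + g) + (f + g + oneEq n) = ((f+g) + (f+g)) + oneEq n := by abel
    rw [this, eqn_add_self, zero_add]
  have : oneEq n ∈ spn Z2 := by
    rw [← hsum]
    exact add_mem (add_mem (hZ1Z2 hf1) hg1) hfg
  exact (consistent_iff Z2).mp hZ2 this

lemma conflictLike_axiom {n : ℕ} {Δ : Set (Clause n)} {C : Clause n} (hC : C ∈ Δ) :
    ConflictLike Δ ((linneg C : Submodule (ZMod 2) (Eqn n)) : Set (Eqn n)) := by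
  by_cases hone : oneEq n ∈ linneg C
  · exact ⟨(linneg C : Set (Eqn n)), Relation.ReflTransGen.refl, hone⟩
  · have hcons : Consistent ((linneg C : Submodule (ZMod 2) (Eqn n)) : Set (Eqn n)) := by
      rw [consistent_iff, spn_coe]; exact hone
    refine ⟨insert (oneEq n) ((linneg C : Submodule (ZMod 2) (Eqn n)) : Set (Eqn n)),
      Relation.ReflTransGen.single ?_, Set.mem_insert _ _⟩
    exact ⟨hcons, C, hC, Or.inl ⟨by rw [spn_coe], rfl⟩⟩

lemma not_conflictLike_bot {n : ℕ} {Δ : Set (Clause n)}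
    (hnoUP : ¬ ConflictLike Δ (∅ : Set (Eqn n))) :
    ¬ ConflictLike Δ ((⊥ : Submodule (ZMod 2) (Eqn n)) : Set (Eqn n)) := by
  rintro ⟨W, hrun, hone⟩
  have hle : spn ((⊥ : Submodule (ZMod 2) (Eqn n)) : Set (Eqn n)) ≤ spn (∅ : Set (Eqn n)) := by
    rw [spn_coe]
    exact bot_le
  have hcons : Consistent (∅ : Set (Eqn n)) := ⟨0, by simp⟩
  obtain ⟨Z, hrunZ, hcase⟩ := run_sim hrun ∅ hle hcons
  rcases hcase with h | ⟨hWle, hZ⟩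
  · exact hnoUP ⟨Z, hrunZ, h⟩
  · exact (consistent_iff Z).mp hZ (hWle (subset_spn _ hone))


/-- If `Δ` is unsatisfiable but unit propagation alone cannot
derive a contradiction from `Δ`, then every subspace-form `Res(⊕)` refutation of
`Δ` (ending with the zero subspace) contains an addition step one of whose two
decompositions is asserting-like for `Δ`. -/
theorem stmt14 {n : ℕ} (Δ : Set (Clause n))
    (hunsat : ¬ ∃ x : Fin n → ZMod 2, ∀ C ∈ Δ, SatsClause x C)
    (hnoUP : ¬ ConflictLike Δ (∅ : Set (Eqn n)))
    (N : ℕ) (L : ℕ → Submodule (ZMod 2) (Eqn n)) (J : ℕ → Option (AddData n))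
    (hvalid : ∀ k < N, SubStepOK Δ L k (J k))
    (href : ∃ k < N, L k = ⊥) :
    ∃ k < N, ∃ d : AddData n, J k = some d ∧
      (AssertingLike Δ d.A d.f ∨ AssertingLike Δ d.B d.g) := by
  by_contra hcon
  push_neg at hcon
  have key : ∀ k, k < N → ConflictLike Δ ((L k : Submodule (ZMod 2) (Eqn n)) : Set (Eqn n)) := by
    intro k
    induction k using Nat.strong_induction_on with
    | _ k ih =>
      intro hk
      have hok := hvalid k hk
      cases hJ : J k with
      | none =>
        rw [hJ] at hok
        obtain ⟨C, hC, hLk⟩ := hok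
        rw [hLk]
        exact conflictLike_axiom hC
      | some d =>
        rw [hJ] at hok
        obtain ⟨hi, hj, hLi, hLj, hLk⟩ := hok
        have hCLi := ih d.i hi (hi.trans hk)
        have hCLj := ih d.j hj (hj.trans hk)
        rw [hLi] at hCLi
        rw [hLj] at hCLj
        have hnot := hcon k hk d hJ
        have habsA : Absorbed Δ d.A d.f := by
          by_contra habs
          exact hnot.1 ⟨hCLi, habs⟩
        have habsB : Absorbed Δ d.B d.g := by
          by_contra habs
          exact hnot.2 ⟨hCLj, habs⟩
        rw [hLk]
        exact conflictLike_of_absorbed habsA habsB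
  obtain ⟨k, hkN, hbot⟩ := href
  have hk := key k hkN
  rw [hbot] at hk
  exact not_conflictLike_bot hnoUP hk


end XorSAT
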